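/- Let G be a finite connected graph, and A, B linked, disjoint, saturated subsets of V(G). Then either N(A ∪ B) is a clique, or for every u, v ∈ N(A ∪ B), F(A, {u}) = F(A, {v}) and F(B, {u}) = F(B, {v}). -/

import Mathlib

open Classical

variable {V : Type*}

namespace Paper

def mInterval (G : SimpleGraph V) (u v : V) : Set V :=
  {w | ∃ p : G.Walk u v, p.IsPath ∧ p.toSubgraph.IsInduced ∧ w ∈ p.support}

def MConvex (G : SimpleGraph V) (C : Set V) : Prop :=
  ∀ u ∈ C, ∀ v ∈ C, mInterval G u v ⊆ C

def mHull (G : SimpleGraph V) (X : Set V) : Set V :=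
  ⋂₀ {C | MConvex G C ∧ X ⊆ C}

def mIntervalSet (G : SimpleGraph V) (Z : Set V) : Set V :=
  ⋃ u ∈ Z, ⋃ v ∈ Z, mInterval G u v

def Sep (G : SimpleGraph V) (A B : Set V) : Prop :=
  ∃ H : Set V, MConvex G H ∧ MConvex G Hᶜ ∧ A ⊆ H ∧ B ⊆ Hᶜ

def nbhd (G : SimpleGraph V) (X : Set V) : Set V :=
  {v | v ∉ X ∧ ∃ x ∈ X, G.Adj x v}

def cnbhd (G : SimpleGraph V) (X : Set V) : Set V := X ∪ nbhd G X

def front (G : SimpleGraph V) (X Y : Set V) : Set V := X ∩ cnbhd G Y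

def IsClique (G : SimpleGraph V) (K : Set V) : Prop :=
  ∀ u ∈ K, ∀ v ∈ K, u ≠ v → G.Adj u v

def shadow (G : SimpleGraph V) (A B : Set V) : Set V :=
  {v | (mHull G (B ∪ {v}) ∩ A).Nonempty}

def Forbidden (G : SimpleGraph V) (A B X : Set V) : Prop :=
  X ⊆ (A ∪ B)ᶜ ∧ (mHull G X ∩ A).Nonempty ∧ (mHull G X ∩ B).Nonempty

def MFS (G : SimpleGraph V) (A B : Set V) : Set (Set V) :=
  {X | Forbidden G A B X ∧ ∀ Y, Y ⊂ X → ¬ Forbidden G A B Y}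

def presat (G : SimpleGraph V) (A B : Set V) : Set V :=
  mHull G (shadow G A B ∪ ⋃ X ∈ MFS G A B, ⋂ x ∈ X, mHull G (A ∪ {x}))

def Linked (G : SimpleGraph V) (A B : Set V) : Prop :=
  ∃ a ∈ A, ∃ b ∈ B, G.Adj a b

def Saturated (G : SimpleGraph V) (A B : Set V) : Prop :=
  A = presat G A B ∧ B = presat G B A

def IsCompOf (G : SimpleGraph V) (W S : Set V) : Prop :=
  S.Nonempty ∧ S ⊆ W ∧ (G.induce S).Connected ∧
    ∀ T, S ⊆ T → T ⊆ W → (G.induce T).Connected → T = S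

def Eqv (G : SimpleGraph V) (A B : Set V) (u v : V) : Prop :=
  u = v ∨ ∃ L : List (Set V), L ≠ [] ∧
    (∀ S ∈ L, IsCompOf G (cnbhd G (A ∪ B))ᶜ S) ∧
    List.Chain' (fun S T => (nbhd G S ∩ nbhd G T).Nonempty) L ∧
    (∃ S₀ ∈ L.head?, u ∈ cnbhd G S₀) ∧
    (∃ Sₖ ∈ L.getLast?, v ∈ cnbhd G Sₖ)

end Paper

open Paper

section Aux

open SimpleGraph

variable {V : Type*}

namespace Paper

lemma subset_mHull (G : SimpleGraph V) (X : Set V) : X ⊆ mHull G X :=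
  fun _ hx C hC => hC.2 hx

lemma mConvex_mHull (G : SimpleGraph V) (X : Set V) : MConvex G (mHull G X) :=
  fun u hu v hv w hw C hC => hC.1 u (hu C hC) v (hv C hC) hw

lemma mHull_min (G : SimpleGraph V) {C : Set V} (hC : MConvex G C) {X : Set V} (hX : X ⊆ C) :
    mHull G X ⊆ C := fun x hx => hx C ⟨hC, hX⟩

lemma mInterval_subset_mHull (G : SimpleGraph V) {X : Set V} {u v : V} (hu : u ∈ mHull G X)
    (hv : v ∈ mHull G X) : mInterval G u v ⊆ mHull G X :=
  mConvex_mHull G X u hu v hv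

lemma path_loop_eq_nil (G : SimpleGraph V) {u : V} (p : G.Walk u u) (hp : p.IsPath) :
    p = SimpleGraph.Walk.nil := by
  cases p with
  | nil => rfl
  | cons h q =>
    rw [SimpleGraph.Walk.cons_isPath_iff] at hp
    exact absurd q.end_mem_support hp.2

lemma mConvex_singleton (G : SimpleGraph V) (x : V) : MConvex G {x} := by
  intro u hu v hv w hw
  rcases hu with rfl
  rcases hv with rfl
  obtain ⟨p, hp, -, hw⟩ := hw
  rw [path_loop_eq_nil G p hp] at hw
  simpa using hw

lemma edge_mem_of_length_one' (G : SimpleGraph V) {x y : V} (q : G.Walk x y)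
    (h : q.length = 1) : s(x, y) ∈ q.edges := by
  cases q with
  | nil => simp at h
  | cons hadj q' =>
    have h0 : q'.length = 0 := by simpa using h
    have := Walk.eq_of_length_eq_zero h0
    subst this
    have : q' = Walk.nil := by
      cases q' with
      | nil => rfl
      | cons h' q'' => simp at h0
    subst this; simp

lemma extract_aux (G : SimpleGraph V) {x y : V} (S : Set V) (n : ℕ) :
    ∀ (w : G.Walk x y), w.length ≤ n → (∀ z ∈ w.support, z ∈ S) →
    ∃ p : G.Walk x y, p.IsPath ∧ p.toSubgraph.IsInduced ∧ ∀ z ∈ p.support, z ∈ S := by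
  induction n using Nat.strong_induction_on with
  | _ n IH =>
    intro w hw hSw
    by_cases hind : w.bypass.toSubgraph.IsInduced
    · exact ⟨w.bypass, w.bypass_isPath, hind,
        fun z hz => hSw z (w.support_bypass_subset hz)⟩
    · set p := w.bypass with hp
      have hplen : p.length ≤ w.length := w.length_bypass_le
      have hpsupp : ∀ z ∈ p.support, z ∈ S :=
        fun z hz => hSw z (w.support_bypass_subset hz)
      rw [Subgraph.IsInduced] at hind
      push_neg at hind
      obtain ⟨a, ha, b, hb, hab, hnadj⟩ := hind
      rw [Walk.mem_verts_toSubgraph] at ha hb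
      have hnE : s(a, b) ∉ p.edges := by
        intro hmem
        exact hnadj ((Walk.mem_edges_toSubgraph p).mpr hmem)
      have hspec := p.take_spec ha
      set p₁ := p.takeUntil a ha with hp₁
      set p₂ := p.dropUntil a ha with hp₂
      have hbsplit : b ∈ p₁.support ∨ b ∈ p₂.support := by
        rw [← Walk.mem_support_append_iff, hspec]; exact hb
      have hlen12 : p₁.length + p₂.length = p.length := by
        rw [← Walk.length_append, hspec]
      rcases hbsplit with hb1 | hb2
      · set t := p₁.takeUntil b hb1 with ht
        set q := p₁.dropUntil b hb1 with hq
        have hq1 : q.length ≠ 0 := fun h0 => hab.ne (Walk.eq_of_length_eq_zero h0).symm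
        have hq2 : q.length ≠ 1 := by
          intro h1
          have : s(b, a) ∈ q.edges := edge_mem_of_length_one' G q h1
          apply hnE
          rw [Sym2.eq_swap]
          exact p.edges_takeUntil_subset ha (p₁.edges_dropUntil_subset hb1 this)
        have hqlen : 2 ≤ q.length := by omega
        have htq : t.length + q.length = p₁.length := by
          rw [← Walk.length_append, p₁.take_spec hb1]
        set w' : G.Walk x y := t.append (Walk.cons hab.symm p₂) with hw'
        have hw'len : w'.length < n := by
          have : w'.length = t.length + (p₂.length + 1) := by
            rw [hw', Walk.length_append, Walk.length_cons]
          omega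
        apply IH w'.length hw'len w' le_rfl
        intro z hz
        rw [hw', Walk.mem_support_append_iff] at hz
        rcases hz with hz | hz
        · exact hpsupp z (p.support_takeUntil_subset ha (p₁.support_takeUntil_subset hb1 hz))
        · rw [Walk.support_cons] at hz
          rcases List.mem_cons.mp hz with rfl | hz
          · exact hpsupp z hb
          · exact hpsupp z (p.support_dropUntil_subset ha hz)
      · set t := p₂.takeUntil b hb2 with ht
        set q := p₂.dropUntil b hb2 with hq
        have ht1 : t.length ≠ 0 := fun h0 => hab.ne (Walk.eq_of_length_eq_zero h0)
        have ht2 : t.length ≠ 1 := by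
          intro h1
          have : s(a, b) ∈ t.edges := edge_mem_of_length_one' G t h1
          exact hnE (p.edges_dropUntil_subset ha (p₂.edges_takeUntil_subset hb2 this))
        have htlen : 2 ≤ t.length := by omega
        have htq : t.length + q.length = p₂.length := by
          rw [← Walk.length_append, p₂.take_spec hb2]
        set w' : G.Walk x y := p₁.append (Walk.cons hab q) with hw'
        have hw'len : w'.length < n := by
          have : w'.length = p₁.length + (q.length + 1) := by
            rw [hw', Walk.length_append, Walk.length_cons]
          omega
        apply IH w'.length hw'len w' le_rfl
        intro z hz
        rw [hw', Walk.mem_support_append_iff] at hz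
        rcases hz with hz | hz
        · exact hpsupp z (p.support_takeUntil_subset ha hz)
        · rw [Walk.support_cons] at hz
          rcases List.mem_cons.mp hz with rfl | hz
          · exact hpsupp z ha
          · exact hpsupp z
              (p.support_dropUntil_subset ha (p₂.support_dropUntil_subset hb2 hz))

lemma exists_induced_path (G : SimpleGraph V) {x y : V} {S : Set V} (w : G.Walk x y)
    (hS : ∀ z ∈ w.support, z ∈ S) :
    ∃ p : G.Walk x y, p.IsPath ∧ p.toSubgraph.IsInduced ∧ ∀ z ∈ p.support, z ∈ S :=
  extract_aux G S w.length w le_rfl hS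

lemma isInduced_of_edges (G : SimpleGraph V) {x y : V} (p : G.Walk x y)
    (h : ∀ u v, u ∈ p.support → v ∈ p.support → G.Adj u v → s(u, v) ∈ p.edges) :
    p.toSubgraph.IsInduced := by
  intro u hu v hv huv
  rw [← Subgraph.mem_edgeSet, Walk.mem_edges_toSubgraph]
  exact h u v ((Walk.mem_verts_toSubgraph p).1 hu) ((Walk.mem_verts_toSubgraph p).1 hv) huv

lemma mid_mem_mInterval (G : SimpleGraph V) {a m b : V} (h1 : G.Adj a m) (h2 : G.Adj m b)
    (hab : ¬ G.Adj a b) (hne : a ≠ b) : m ∈ mInterval G a b := by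
  refine ⟨Walk.cons h1 (Walk.cons h2 Walk.nil), ?_, ?_, by simp⟩
  · simp [Walk.isPath_def, h1.ne, h2.ne, hne]
  · apply isInduced_of_edges
    intro u v hu hv huv
    simp only [Walk.support_cons, Walk.support_nil, List.mem_cons, List.not_mem_nil,
      or_false, List.mem_singleton] at hu hv
    simp only [Walk.edges_cons, Walk.edges_nil, List.mem_cons, List.not_mem_nil, or_false]
    rcases hu with rfl | rfl | rfl <;> rcases hv with rfl | rfl | rfl <;>
      first
        | exact absurd huv (G.irrefl)
        | exact absurd huv hab
        | exact absurd huv.symm hab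
        | simp [Sym2.eq_swap]

lemma mem_mInterval₂ (G : SimpleGraph V) {a u b v : V}
    (h1 : G.Adj a u) (h2 : G.Adj u b) (h3 : G.Adj b v)
    (nab : ¬ G.Adj a b) (nav : ¬ G.Adj a v) (nuv : ¬ G.Adj u v)
    (dab : a ≠ b) (dav : a ≠ v) (duv : u ≠ v) :
    b ∈ mInterval G a v := by
  refine ⟨Walk.cons h1 (Walk.cons h2 (Walk.cons h3 Walk.nil)), ?_, ?_, by simp⟩
  · simp [Walk.isPath_def, h1.ne, h2.ne, h3.ne, dab, dav, duv]
  · apply isInduced_of_edges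
    intro p q hp hq hpq
    simp only [Walk.support_cons, Walk.support_nil, List.mem_cons, List.not_mem_nil,
      or_false, List.mem_singleton] at hp hq
    simp only [Walk.edges_cons, Walk.edges_nil, List.mem_cons, List.not_mem_nil, or_false]
    rcases hp with rfl | rfl | rfl | rfl <;> rcases hq with rfl | rfl | rfl | rfl <;>
      first
        | exact absurd hpq (G.irrefl)
        | exact absurd hpq nab
        | exact absurd hpq.symm nab
        | exact absurd hpq nav
        | exact absurd hpq.symm nav
        | exact absurd hpq nuv
        | exact absurd hpq.symm nuv
        | simp [Sym2.eq_swap]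

lemma adj_pair (G : SimpleGraph V) (hG : G.Connected) {A B : Set V}
    (hAconv : MConvex G A)
    (hSA : ∀ w, w ∉ A → ∀ z, z ∈ mHull G (B ∪ {w}) → z ∉ A)
    (hSB : ∀ w, w ∉ B → ∀ z, z ∈ mHull G (A ∪ {w}) → z ∉ B)
    {a b u x : V} (ha : a ∈ A) (hb : b ∈ B) (hab : G.Adj a b)
    (hx : x ∈ A) (hxu : G.Adj x u) (huA : u ∉ A) (huB : u ∉ B) :
    G.Adj u b ∧ G.Adj u a := by
  have hub : G.Adj u b := by
    by_contra hnub
    obtain ⟨w0⟩ := hG.preconnected a x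
    obtain ⟨pA, hpA, hpAind, -⟩ :=
      exists_induced_path G (S := Set.univ) w0 (fun z _ => trivial)
    have hpAsub : ∀ z ∈ pA.support, z ∈ A :=
      fun z hz => hAconv a ha x hx ⟨pA, hpA, hpAind, hz⟩
    have hWsub : ∀ z ∈ (Walk.cons hab.symm (pA.concat hxu)).support,
        z ∈ insert b (insert u A) := by
      intro z hz
      rw [Walk.support_cons] at hz
      rcases List.mem_cons.mp hz with rfl | hz
      · exact Set.mem_insert _ _
      · rw [Walk.support_concat] at hz
        rcases List.mem_append.mp hz with hz | hz
        · exact Set.mem_insert_of_mem _ (Set.mem_insert_of_mem _ (hpAsub z hz))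
        · rw [List.mem_singleton] at hz
          subst hz
          exact Set.mem_insert_of_mem _ (Set.mem_insert _ _)
    obtain ⟨q, hq, hqind, hqsub⟩ := exists_induced_path G _ hWsub
    cases q with
    | nil => exact huB hb
    | @cons _ c _ hadj q' =>
      by_cases hcu : c = u
      · subst hcu
        have hq' : q' = Walk.nil :=
          path_loop_eq_nil G q' (((Walk.cons_isPath_iff _ _).mp hq).1)
        subst hq'
        exact hnub hadj.symm
      · have hcS : c ∈ insert b (insert u A) := by
          apply hqsub
          rw [Walk.support_cons]
          exact List.mem_cons_of_mem _ q'.start_mem_support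
        have hcA : c ∈ A := by
          rcases hcS with rfl | hcS
          · exact absurd rfl hadj.ne
          · rcases hcS with rfl | hcS
            · exact absurd rfl hcu
            · exact hcS
        have hcH : c ∈ mHull G (B ∪ {u}) :=
          mInterval_subset_mHull G (subset_mHull G _ (Or.inl hb))
            (subset_mHull G _ (Or.inr rfl))
            ⟨Walk.cons hadj q', hq, hqind, by
              rw [Walk.support_cons]; exact List.mem_cons_of_mem _ q'.start_mem_support⟩
        exact hSA u huA c hcH hcA
  have hua : G.Adj u a := by
    by_contra hnua
    have hmid : b ∈ mInterval G a u :=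
      mid_mem_mInterval G hab hub.symm (fun h => hnua h.symm) (fun h => huA (h ▸ ha))
    have hbH : b ∈ mHull G (A ∪ {u}) :=
      mInterval_subset_mHull G (subset_mHull G _ (Or.inl ha))
        (subset_mHull G _ (Or.inr rfl)) hmid
    exact hSB u huB b hbH hb
  exact ⟨hub, hua⟩

lemma lem_one (G : SimpleGraph V) (hG : G.Connected) {A B : Set V}
    (hAconv : MConvex G A) (hBconv : MConvex G B)
    (hSA : ∀ w, w ∉ A → ∀ z, z ∈ mHull G (B ∪ {w}) → z ∉ A)
    (hSB : ∀ w, w ∉ B → ∀ z, z ∈ mHull G (A ∪ {w}) → z ∉ B)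
    {a b : V} (ha : a ∈ A) (hb : b ∈ B) (hab : G.Adj a b)
    {u : V} (hu : u ∈ nbhd G (A ∪ B)) : G.Adj u a ∧ G.Adj u b := by
  obtain ⟨huAB, x, hx, hxu⟩ := hu
  have huA : u ∉ A := fun h => huAB (Or.inl h)
  have huB : u ∉ B := fun h => huAB (Or.inr h)
  rcases hx with hxA | hxB
  · obtain ⟨h1, h2⟩ := adj_pair G hG hAconv hSA hSB ha hb hab hxA hxu huA huB
    exact ⟨h2, h1⟩
  · exact adj_pair G hG hBconv hSB hSA hb ha hab.symm hxB hxu huB huA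

lemma const_nbhd (G : SimpleGraph V) (hG : G.Connected) {A B : Set V}
    (hAconv : MConvex G A) (hBconv : MConvex G B)
    (hSA : ∀ w, w ∉ A → ∀ z, z ∈ mHull G (B ∪ {w}) → z ∉ A)
    (hSB : ∀ w, w ∉ B → ∀ z, z ∈ mHull G (A ∪ {w}) → z ∉ B)
    (hMFS : ∀ X ∈ MFS G A B, ∀ z, (∀ x ∈ X, z ∈ mHull G (A ∪ {x})) → z ∈ A)
    (hd : Disjoint A B)
    {a₀ b₀ : V} (ha₀ : a₀ ∈ A) (hb₀ : b₀ ∈ B) (hab : G.Adj a₀ b₀)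
    {x y : V} (hx : x ∈ nbhd G (A ∪ B)) (hy : y ∈ nbhd G (A ∪ B))
    (hnxy : x ≠ y) (hxy : ¬ G.Adj x y) :
    ∀ u ∈ nbhd G (A ∪ B), A ∩ G.neighborSet u = A ∩ G.neighborSet x := by
  have hL1 : ∀ u ∈ nbhd G (A ∪ B), ∀ a ∈ A, ∀ b ∈ B, G.Adj a b →
      G.Adj u a ∧ G.Adj u b :=
    fun u hu a ha b hb h => lem_one G hG hAconv hBconv hSA hSB ha hb h hu
  have hxA : x ∉ A := fun h => hx.1 (Or.inl h)
  have hxB : x ∉ B := fun h => hx.1 (Or.inr h)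
  have hyA : y ∉ A := fun h => hy.1 (Or.inl h)
  have hyB : y ∉ B := fun h => hy.1 (Or.inr h)
  have hxa₀ : G.Adj x a₀ := (hL1 x hx a₀ ha₀ b₀ hb₀ hab).1
  have hxb₀ : G.Adj x b₀ := (hL1 x hx a₀ ha₀ b₀ hb₀ hab).2
  have hya₀ : G.Adj y a₀ := (hL1 y hy a₀ ha₀ b₀ hb₀ hab).1
  have hyb₀ : G.Adj y b₀ := (hL1 y hy a₀ ha₀ b₀ hb₀ hab).2
  -- pair lemma
  have pairLem : ∀ u v, u ∈ nbhd G (A ∪ B) → v ∈ nbhd G (A ∪ B) → ¬ G.Adj u v →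
      ∀ a ∈ A, G.Adj a u → G.Adj a v := by
    intro u v hu hv hnuv a ha hau
    by_contra hnav
    by_cases hlink : ∃ b ∈ B, G.Adj a b
    · obtain ⟨b, hb, hab'⟩ := hlink
      exact hnav ((hL1 v hv a ha b hb hab').1).symm
    · push_neg at hlink
      have hub₀ : G.Adj u b₀ := (hL1 u hu a₀ ha₀ b₀ hb₀ hab).2
      have hb₀v : G.Adj b₀ v := ((hL1 v hv a₀ ha₀ b₀ hb₀ hab).2).symm
      have hmem : b₀ ∈ mInterval G a v :=
        mem_mInterval₂ G hau hub₀ hb₀v (hlink b₀ hb₀) hnav hnuv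
          (fun h => Set.disjoint_left.mp hd ha (h ▸ hb₀))
          (fun h => hv.1 (Or.inl (h ▸ ha)))
          (fun h => hnav (h ▸ hau))
      have hbH : b₀ ∈ mHull G (A ∪ {v}) :=
        mInterval_subset_mHull G (subset_mHull G _ (Or.inl ha))
          (subset_mHull G _ (Or.inr rfl)) hmem
      exact hSB v (fun h => hv.1 (Or.inr h)) b₀ hbH hb₀
  -- {x, y} is a minimal forbidden set
  have hforb : Forbidden G A B {x, y} := by
    refine ⟨?_, ⟨a₀, ?_, ha₀⟩, ⟨b₀, ?_, hb₀⟩⟩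
    · intro z hz
      rcases hz with rfl | rfl
      · exact hx.1
      · exact hy.1
    · exact mInterval_subset_mHull G (subset_mHull G _ (Or.inl rfl))
        (subset_mHull G _ (Or.inr rfl))
        (mid_mem_mInterval G hxa₀ hya₀.symm hxy hnxy)
    · exact mInterval_subset_mHull G (subset_mHull G _ (Or.inl rfl))
        (subset_mHull G _ (Or.inr rfl))
        (mid_mem_mInterval G hxb₀ hyb₀.symm hxy hnxy)
  have hmfs : {x, y} ∈ MFS G A B := by
    refine ⟨hforb, ?_⟩
    intro Y hY hF
    obtain ⟨hYsub, ⟨z, hzH, hzA⟩, -⟩ := hF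
    by_cases hxY : x ∈ Y
    · by_cases hyY : y ∈ Y
      · apply hY.ne
        apply Set.Subset.antisymm hY.subset
        intro w hw
        rcases hw with rfl | rfl
        · exact hxY
        · exact hyY
      · have hYx : Y ⊆ {x} := by
          intro w hw
          rcases hY.subset hw with rfl | rfl
          · rfl
          · exact absurd hw hyY
        have := mHull_min G (mConvex_singleton G x) hYx hzH
        rcases this with rfl
        exact hxA hzA
    · have hYy : Y ⊆ {y} := by
        intro w hw
        rcases hY.subset hw with rfl | rfl
        · exact absurd hw hxY
        · rfl
      have := mHull_min G (mConvex_singleton G y) hYy hzH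
      rcases this with rfl
      exact hyA hzA
  -- the two inclusions
  have claimF : ∀ u ∈ nbhd G (A ∪ B), ∀ a ∈ A, G.Adj a u → G.Adj a x := by
    intro u hu a ha hau
    by_cases h1 : G.Adj u x
    · by_cases h2 : G.Adj u y
      · by_contra hax
        have hay : ¬ G.Adj a y :=
          fun hay => hax (pairLem y x hy hx (fun h => hxy h.symm) a ha hay)
        have hux : u ∈ mHull G (A ∪ {x}) :=
          mInterval_subset_mHull G (subset_mHull G _ (Or.inl ha))
            (subset_mHull G _ (Or.inr rfl))
            (mid_mem_mInterval G hau h1 hax (fun h => hxA (h ▸ ha)))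
        have huy : u ∈ mHull G (A ∪ {y}) :=
          mInterval_subset_mHull G (subset_mHull G _ (Or.inl ha))
            (subset_mHull G _ (Or.inr rfl))
            (mid_mem_mInterval G hau h2 hay (fun h => hyA (h ▸ ha)))
        have : u ∈ A := by
          apply hMFS {x, y} hmfs u
          intro w hw
          rcases hw with rfl | rfl
          · exact hux
          · exact huy
        exact hu.1 (Or.inl this)
      · exact pairLem y x hy hx (fun h => hxy h.symm) a ha
          (pairLem u y hu hy h2 a ha hau)
    · exact pairLem u x hu hx h1 a ha hau
  have claimB : ∀ u ∈ nbhd G (A ∪ B), ∀ a ∈ A, G.Adj a x → G.Adj a u := by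
    intro u hu a ha hax
    by_cases h1 : G.Adj u x
    · by_cases h2 : G.Adj u y
      · by_contra hau
        have hay : G.Adj a y := pairLem x y hx hy hxy a ha hax
        have hxH : x ∈ mHull G (A ∪ {u}) :=
          mInterval_subset_mHull G (subset_mHull G _ (Or.inl ha))
            (subset_mHull G _ (Or.inr rfl))
            (mid_mem_mInterval G hax h1.symm hau (fun h => hu.1 (Or.inl (h ▸ ha))))
        have hyH : y ∈ mHull G (A ∪ {u}) :=
          mInterval_subset_mHull G (subset_mHull G _ (Or.inl ha))
            (subset_mHull G _ (Or.inr rfl))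
            (mid_mem_mInterval G hay h2.symm hau (fun h => hu.1 (Or.inl (h ▸ ha))))
        have hb₀H : b₀ ∈ mHull G (A ∪ {u}) :=
          mInterval_subset_mHull G hxH hyH
            (mid_mem_mInterval G hxb₀ hyb₀.symm hxy hnxy)
        exact hSB u (fun h => hu.1 (Or.inr h)) b₀ hb₀H hb₀
      · exact pairLem y u hy hu (fun h => h2 h.symm) a ha
          (pairLem x y hx hy hxy a ha hax)
    · exact pairLem x u hx hu (fun h => h1 h.symm) a ha hax
  intro u hu
  ext a
  simp only [Set.mem_inter_iff, mem_neighborSet]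
  constructor
  · rintro ⟨ha, hadj⟩
    exact ⟨ha, (claimF u hu a ha hadj.symm).symm⟩
  · rintro ⟨ha, hadj⟩
    exact ⟨ha, (claimB u hu a ha hadj.symm).symm⟩

end Paper

end Aux

theorem stmt_12 [Fintype V] (G : SimpleGraph V) (hG : G.Connected)
    (A B : Set V) (hL : Linked G A B) (hd : Disjoint A B)
    (hS : Saturated G A B) :
    IsClique G (nbhd G (A ∪ B)) ∨
      ∀ u ∈ nbhd G (A ∪ B), ∀ v ∈ nbhd G (A ∪ B),
        A ∩ G.neighborSet u = A ∩ G.neighborSet v ∧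
        B ∩ G.neighborSet u = B ∩ G.neighborSet v := by
  obtain ⟨a₀, ha₀, b₀, hb₀, hab⟩ := hL
  have hAconv : MConvex G A := by rw [hS.1]; exact mConvex_mHull G _
  have hBconv : MConvex G B := by rw [hS.2]; exact mConvex_mHull G _
  have hSA : ∀ w, w ∉ A → ∀ z, z ∈ mHull G (B ∪ {w}) → z ∉ A := by
    intro w hw z hz hzA
    apply hw
    rw [hS.1]
    exact subset_mHull G _ (Or.inl ⟨z, hz, hzA⟩)
  have hSB : ∀ w, w ∉ B → ∀ z, z ∈ mHull G (A ∪ {w}) → z ∉ B := by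
    intro w hw z hz hzB
    apply hw
    rw [hS.2]
    exact subset_mHull G _ (Or.inl ⟨z, hz, hzB⟩)
  have hMFSA : ∀ X ∈ MFS G A B, ∀ z, (∀ x ∈ X, z ∈ mHull G (A ∪ {x})) → z ∈ A := by
    intro X hX z hz
    rw [hS.1]
    apply subset_mHull
    apply Set.mem_union_right
    rw [Set.mem_iUnion₂]
    exact ⟨X, hX, by rw [Set.mem_iInter₂]; exact hz⟩
  have hMFSB : ∀ X ∈ MFS G B A, ∀ z, (∀ x ∈ X, z ∈ mHull G (B ∪ {x})) → z ∈ B := by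
    intro X hX z hz
    rw [hS.2]
    apply subset_mHull
    apply Set.mem_union_right
    rw [Set.mem_iUnion₂]
    exact ⟨X, hX, by rw [Set.mem_iInter₂]; exact hz⟩
  by_cases hcl : IsClique G (nbhd G (A ∪ B))
  · exact Or.inl hcl
  right
  rw [IsClique] at hcl
  push_neg at hcl
  obtain ⟨x, hx, y, hy, hnxy, hxy⟩ := hcl
  have mainA := const_nbhd G hG hAconv hBconv hSA hSB hMFSA hd ha₀ hb₀ hab hx hy hnxy hxy
  have hx' : x ∈ nbhd G (B ∪ A) := by rwa [Set.union_comm]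
  have hy' : y ∈ nbhd G (B ∪ A) := by rwa [Set.union_comm]
  have mainB := const_nbhd G hG hBconv hAconv hSB hSA hMFSB hd.symm hb₀ ha₀ hab.symm
    hx' hy' hnxy hxy
  rw [Set.union_comm B A] at mainB
  intro u hu v hv
  exact ⟨by rw [mainA u hu, mainA v hv], by rw [mainB u hu, mainB v hv]⟩
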